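/- arXiv:0810.4968 — 3 statements merged into one kernel-verified Lean document; each statement's English description precedes it below -/
import Mathlib

section
/- Let n ≥ 1 be an integer, β > 0, B the ball of radius β centered at the origin in ℝⁿ, and f = 1_B/√vol(B) its normalized indicator function. Then for every z > 0, the power of the Fourier transform of f at frequencies of magnitude at most z satisfies ∫_{|k| ≤ z} |f̂(k)|² dk < (1/(πn)) · (2πβez/n)^n. In particular, taking z = n/(2πβe), at most a 1/(πn) fraction of the total power lies at frequencies of magnitude below n/(2πβe). -/
open MeasureTheory Real Set

noncomputable section
open scoped Classical

/-- Euclidean space `ℝⁿ`. -/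
abbrev En (n : ℕ) := EuclideanSpace ℝ (Fin n)

/-- The Fourier transform `f̂(k) = ∫ f(x) e^{-2πi k·x} dx`. -/
def fourierT {n : ℕ} (f : En n → ℂ) (k : En n) : ℂ :=
  ∫ x : En n, Complex.exp (-2 * Real.pi * Complex.I * ((inner ℝ k x : ℝ) : ℂ)) * f x

/-- The normalized indicator function `f = 1_B / √vol(B)` of the ball of radius `β`
centered at the origin. -/
def ballIndicator (n : ℕ) (β : ℝ) : En n → ℂ := fun x =>
  if x ∈ Metric.closedBall (0 : En n) β then
    ((Real.sqrt ((volume (Metric.closedBall (0 : En n) β)).toReal))⁻¹ : ℝ)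
  else 0



section AuxProof
open Stirling Filter Finset

-- lower bound: stirlingSeq (m+1) ≥ √π
lemma L4 (m : ℕ) : Real.sqrt π ≤ stirlingSeq (m + 1) := by
  have h1 : Filter.Tendsto (fun n : ℕ => stirlingSeq (n + 1)) atTop (nhds (Real.sqrt π)) :=
    (Filter.tendsto_add_atTop_iff_nat 1).mpr tendsto_stirlingSeq_sqrt_pi
  have h2 : Antitone (fun n : ℕ => stirlingSeq (n + 1)) := stirlingSeq'_antitone
  exact h2.le_of_tendsto h1 m

-- strict decrement
lemma L3 (m : ℕ) : stirlingSeq (m + 2) < stirlingSeq (m + 1) := by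
  have h := log_stirlingSeq_diff_hasSum m
  have hpos : 0 < log (stirlingSeq (m + 1)) - log (stirlingSeq (m + 2)) := by
    have h0 : (0:ℝ) < (1 : ℝ) / (2 * ((0:ℕ) + 1) + 1) * ((1 / (2 * ↑(m + 1) + 1)) ^ 2) ^ ((0:ℕ) + 1) := by
      positivity
    have := le_hasSum h 0 (fun k _ => by positivity)
    linarith
  have := sub_pos.mp hpos
  exact (Real.log_lt_log_iff (stirlingSeq'_pos (m+1)) (stirlingSeq'_pos m)).mp this

lemma L5 (m : ℕ) : Real.sqrt π < stirlingSeq (m + 1) := lt_of_le_of_lt (L4 (m+1)) (L3 m)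

-- refined decrement bound with the 1/3 factor
lemma diff_le (m : ℕ) : log (stirlingSeq (m + 1)) - log (stirlingSeq (m + 2)) ≤
    1 / (12 * ((m:ℝ) + 1) * ((m:ℝ) + 2)) := by
  set y : ℝ := ((1 : ℝ) / (2 * ↑(m + 1) + 1)) ^ 2 with hy
  have hy0 : 0 ≤ y := sq_nonneg _
  have hy1 : y < 1 := by
    rw [hy, one_div, inv_pow]
    exact inv_lt_one_of_one_lt₀ (one_lt_pow₀ (lt_add_of_pos_left _ <| by positivity) two_ne_zero)
  have g : HasSum (fun k : ℕ => (1/3 : ℝ) * y ^ (k + 1)) ((1/3) * (y / (1 - y))) := by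
    have := (hasSum_geometric_of_lt_one hy0 hy1).mul_left y
    simp_rw [← _root_.pow_succ'] at this
    exact this.mul_left (1/3)
  have hab : ∀ k : ℕ, (1 : ℝ) / (2 * ↑(k + 1) + 1) * y ^ (k + 1) ≤ (1/3) * y ^ (k+1) := by
    intro k
    have : (1:ℝ) / (2 * ↑(k+1) + 1) ≤ 1/3 := by
      rw [div_le_div_iff₀ (by positivity) (by norm_num)]
      push_cast; nlinarith [Nat.cast_nonneg (α := ℝ) k]
    exact mul_le_mul_of_nonneg_right this (pow_nonneg hy0 _)
  have key := hasSum_le hab (log_stirlingSeq_diff_hasSum m) g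
  refine key.trans (le_of_eq ?_)
  have hX : (0:ℝ) < 2 * ((m:ℝ) + 1) + 1 := by positivity
  have hlt : (1 / (2 * ((m:ℝ) + 1) + 1)) ^ 2 < 1 := by
    rw [div_pow, one_pow, div_lt_one (by positivity)]
    nlinarith
  have h1y : 1 - (1 / (2 * ((m:ℝ) + 1) + 1)) ^ 2 ≠ 0 := by linarith
  have h1y' : (0:ℝ) < 1 - (1 / (2 * ((m:ℝ) + 1) + 1)) ^ 2 := by
    rcases lt_or_eq_of_le (sub_nonneg.mpr hlt.le) with h | h
    · exact h
    · exact absurd h.symm h1y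
  rw [hy]
  push_cast
  rw [div_mul_div_comm, one_mul, div_eq_div_iff (by positivity) (by positivity)]
  field_simp
  ring

-- telescoped: log stirlingSeq (m+1) ≤ log √π + 1/(12(m+1))
lemma upper (m : ℕ) : log (stirlingSeq (m + 1)) ≤ log (Real.sqrt π) + 1 / (12 * ((m:ℝ) + 1)) := by
  have T : ∀ j : ℕ, log (stirlingSeq (m + 1)) - log (stirlingSeq (m + 1 + j)) ≤
      1 / (12 * ((m:ℝ) + 1)) - 1 / (12 * ((m:ℝ) + 1 + j)) := by
    intro j
    induction j with
    | zero => simp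
    | succ j ih =>
      have hd := diff_le (m + j)
      have harr : m + 1 + (j + 1) = (m + j) + 2 := by omega
      have harr2 : m + 1 + j = (m + j) + 1 := by omega
      rw [harr]
      rw [harr2] at ih
      push_cast at hd ih ⊢
      have : 1 / (12 * ((m:ℝ) + j + 1) * ((m:ℝ) + j + 2)) =
          1 / (12 * ((m:ℝ) + 1 + j)) - 1 / (12 * ((m:ℝ) + 1 + (j+1))) := by
        rw [div_sub_div _ _ (by positivity) (by positivity), div_eq_div_iff (by positivity) (by positivity)]
        ring
      linarith
  have hlim : Tendsto (fun j : ℕ => log (stirlingSeq (m + 1 + j))) atTop (nhds (log (Real.sqrt π))) := by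
    have h0 : Tendsto (fun j : ℕ => stirlingSeq (m + 1 + j)) atTop (nhds (Real.sqrt π)) := by
      have := tendsto_stirlingSeq_sqrt_pi.comp (tendsto_add_atTop_nat (m+1))
      simpa [Function.comp_def, Nat.add_comm] using this
    exact (Real.continuousAt_log (by positivity)).tendsto.comp h0
  have : log (stirlingSeq (m + 1)) - 1 / (12 * ((m:ℝ) + 1)) ≤ log (Real.sqrt π) := by
    refine ge_of_tendsto hlim ?_
    filter_upwards with j
    have h2 : 0 ≤ 1 / (12 * ((m:ℝ) + 1 + j)) := by positivity
    linarith [T j]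
  linarith

-- (C)
lemma logC (m : ℕ) (hm : 1 ≤ m) :
    1 + 1 / (6 * (m:ℝ)) < (2 * (m:ℝ) + 1) * Real.log (1 + 1 / (2 * (m:ℝ))) := by
  have hM : (1:ℝ) ≤ (m:ℝ) := by exact_mod_cast hm
  have h := Real.hasSum_log_one_add_inv (a := 2 * (m:ℝ)) (by positivity)
  have hlow : 2 * (1 / (2 * (2 * (m:ℝ)) + 1)) ≤ Real.log (1 + (2 * (m:ℝ))⁻¹) := by
    have h0 := le_hasSum h 0 (fun k _ => by positivity)
    simpa using h0
  rw [← one_div] at hlow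
  have hK : (0:ℝ) < 2 * (m:ℝ) + 1 := by positivity
  have step : (2 * (m:ℝ) + 1) * (2 * (1 / (2 * (2 * (m:ℝ)) + 1))) ≤
      (2 * (m:ℝ) + 1) * Real.log (1 + 1 / (2 * (m:ℝ))) :=
    mul_le_mul_of_nonneg_left hlow hK.le
  refine lt_of_lt_of_le ?_ step
  have h4 : (0:ℝ) < 2 * (2 * (m:ℝ)) + 1 := by positivity
  have e1 : (2 * (m:ℝ) + 1) * (2 * (1 / (2 * (2 * (m:ℝ)) + 1))) = (4*(m:ℝ)+2)/(4*(m:ℝ)+1) := by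
    field_simp; ring
  have e2 : 1 + 1 / (6 * (m:ℝ)) = (6*(m:ℝ)+1)/(6*(m:ℝ)) := by field_simp
  rw [e1, e2, div_lt_div_iff₀ (by positivity) (by positivity)]
  nlinarith

-- A : lower bound for factorial
lemma factA (j : ℕ) : Real.sqrt π * (Real.sqrt (2 * ((j:ℝ)+1)) * (((j:ℝ)+1) / exp 1) ^ (j+1))
    ≤ ((j+1).factorial : ℝ) := by
  have h := L4 j
  have hd : (0:ℝ) < Real.sqrt (2 * ((j:ℝ)+1)) * (((j:ℝ)+1) / exp 1) ^ (j+1) := by positivity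
  rw [stirlingSeq] at h
  push_cast at h
  rw [le_div_iff₀ hd] at h
  exact h

-- B : upper bound for factorial
lemma factB (j : ℕ) : ((j+1).factorial : ℝ) ≤ Real.sqrt π * Real.exp (1 / (12 * ((j:ℝ)+1))) *
    (Real.sqrt (2 * ((j:ℝ)+1)) * (((j:ℝ)+1) / exp 1) ^ (j+1)) := by
  have h := upper j
  have hs := stirlingSeq'_pos j
  have h2 : stirlingSeq (j+1) ≤ Real.sqrt π * Real.exp (1 / (12 * ((j:ℝ)+1))) := by
    have := Real.exp_le_exp.mpr h
    rw [Real.exp_log hs, Real.exp_add, Real.exp_log (Real.sqrt_pos.mpr pi_pos)] at this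
    exact this
  have hd : (0:ℝ) < Real.sqrt (2 * ((j:ℝ)+1)) * (((j:ℝ)+1) / exp 1) ^ (j+1) := by positivity
  rw [stirlingSeq] at h2
  push_cast at h2
  rw [div_le_iff₀ hd] at h2
  exact h2

lemma factA' (j : ℕ) : Real.sqrt π * (Real.sqrt (2 * ((j:ℝ)+1)) * (((j:ℝ)+1) / exp 1) ^ (j+1))
    < ((j+1).factorial : ℝ) := by
  have h := L5 j
  have hd : (0:ℝ) < Real.sqrt (2 * ((j:ℝ)+1)) * (((j:ℝ)+1) / exp 1) ^ (j+1) := by positivity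
  rw [stirlingSeq] at h
  push_cast at h
  rw [lt_div_iff₀ hd] at h
  exact h

lemma even_key (m : ℕ) (hm : 1 ≤ m) :
    π * (2*(m:ℝ)) * ((2*(m:ℝ)) / (2*exp 1)) ^ (2*m) < ((m.factorial : ℝ))^2 := by
  obtain ⟨j, rfl⟩ : ∃ j, m = j + 1 := ⟨m - 1, by omega⟩
  have A := factA' j
  set X : ℝ := (j:ℝ) + 1 with hX
  have hX0 : (0:ℝ) ≤ 2 * X := by positivity
  have h0 : 0 ≤ Real.sqrt π * (Real.sqrt (2*X) * (X/exp 1)^(j+1)) := by positivity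
  have e : (Real.sqrt π * (Real.sqrt (2*X) * (X/exp 1)^(j+1)))^2
      = π * (2*X) * ((X/exp 1)^(j+1))^2 := by
    rw [mul_pow, mul_pow, Real.sq_sqrt pi_pos.le, Real.sq_sqrt hX0]; ring
  have e2 : ((2*X) / (2*exp 1)) ^ (2*(j+1)) = ((X/exp 1)^(j+1))^2 := by
    rw [mul_div_mul_left _ _ (two_ne_zero : (2:ℝ) ≠ 0), mul_comm 2 (j+1), pow_mul]
  have cast1 : (↑(j+1) : ℝ) = X := by push_cast; rw [hX]
  rw [cast1, e2, ← e]
  exact pow_lt_pow_left₀ A h0 (by norm_num)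

lemma odd_key (m : ℕ) (hm : 1 ≤ m) :
    π * (2*(m:ℝ)+1) * ((2*(m:ℝ)+1) / (2 * exp 1)) ^ (2*m+1) <
      (Real.sqrt π * (((2*m+1).factorial:ℝ)) / (2^(2*m+1) * ((m.factorial:ℝ))))^2 := by
  have hM : (1:ℝ) ≤ (m:ℝ) := by exact_mod_cast hm
  set M : ℝ := (m:ℝ) with hMdef
  set E : ℝ := exp 1 with hE
  have hE0 : 0 < E := exp_pos 1
  set K : ℝ := 2*M+1 with hK
  have hK0 : (0:ℝ) < K := by rw [hK]; positivity
  set F1 : ℝ := ((2*m+1).factorial : ℝ) with hF1def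
  set F2 : ℝ := (m.factorial : ℝ) with hF2def
  have hF1 : 0 < F1 := by rw [hF1def]; exact_mod_cast Nat.factorial_pos _
  have hF2 : 0 < F2 := by rw [hF2def]; exact_mod_cast Nat.factorial_pos _
  have hM0 : (0:ℝ) < M := by linarith
  -- A squared
  have A : Real.sqrt π * (Real.sqrt (2*K) * (K/E)^(2*m+1)) ≤ F1 := by
    have := factA (2*m)
    push_cast at this
    convert this using 4 <;> rw [hK, hMdef] <;> push_cast <;> ring
  have A2 : π * (2*K) * ((K/E)^(2*m+1))^2 ≤ F1^2 := by
    have h0 : 0 ≤ Real.sqrt π * (Real.sqrt (2*K) * (K/E)^(2*m+1)) := by positivity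
    have e : (Real.sqrt π * (Real.sqrt (2*K) * (K/E)^(2*m+1)))^2
        = π * (2*K) * ((K/E)^(2*m+1))^2 := by
      rw [mul_pow, mul_pow, Real.sq_sqrt pi_pos.le, Real.sq_sqrt (by positivity : (0:ℝ) ≤ 2*K)]
      ring
    rw [← e]
    exact pow_le_pow_left₀ h0 A 2
  -- B squared
  have B : F2 ≤ Real.sqrt π * Real.exp (1/(12*M)) * (Real.sqrt (2*M) * (M/E)^m) := by
    obtain ⟨j, rfl⟩ : ∃ j, m = j + 1 := ⟨m - 1, by omega⟩
    have := factB j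
    push_cast at this ⊢
    convert this using 3 <;> rw [hMdef] <;> push_cast <;> norm_num [hE]
  have B2 : F2^2 ≤ π * Real.exp (1/(6*M)) * (2*M) * ((M/E)^m)^2 := by
    have h0 : 0 ≤ F2 := hF2.le
    have e : (Real.sqrt π * Real.exp (1/(12*M)) * (Real.sqrt (2*M) * (M/E)^m))^2
        = π * Real.exp (1/(6*M)) * (2*M) * ((M/E)^m)^2 := by
      rw [mul_pow, mul_pow, mul_pow, Real.sq_sqrt pi_pos.le,
        Real.sq_sqrt (by positivity : (0:ℝ) ≤ 2*M), ← Real.exp_nat_mul]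
      have : (2:ℕ) * (1/(12*M)) = 1/(6*M) := by push_cast; field_simp; ring
      rw [this]; ring
    rw [← e]
    exact pow_le_pow_left₀ h0 B 2
  -- D1'
  have D1 : E * Real.exp (1/(6*M)) * (2*M)^(2*m+1) < K^(2*m+1) := by
    have hlog := logC m hm
    rw [← hMdef] at hlog
    have hexp := Real.exp_lt_exp.mpr hlog
    rw [Real.exp_add] at hexp
    have cast1 : (2*M+1) = ((2*m+1 : ℕ):ℝ) := by rw [hMdef]; push_cast; ring
    have harg : 1 + 1/(2*M) = K/(2*M) := by rw [hK]; field_simp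
    have hpos : (0:ℝ) < 1 + 1/(2*M) := by positivity
    rw [cast1, Real.exp_nat_mul, Real.exp_log hpos, harg] at hexp
    rw [div_pow, lt_div_iff₀ (by positivity : (0:ℝ) < (2*M)^(2*m+1))] at hexp
    exact hexp
  -- final assembly
  have rhs_eq : (Real.sqrt π * F1 / (2^(2*m+1) * F2))^2 = π * F1^2 / ((2^(2*m+1):ℝ)^2 * F2^2) := by
    rw [div_pow, mul_pow, mul_pow, Real.sq_sqrt pi_pos.le]
  rw [rhs_eq, lt_div_iff₀ (by positivity)]
  set c : ℝ := Real.exp (1/(6*M)) with hc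
  have hc0 : 0 < c := exp_pos _
  have stuffpos : (0:ℝ) < 2*π^2*K*K^(2*m+1)/E^(4*m+2) := by positivity
  calc π * K * (K/(2*E))^(2*m+1) * ((2^(2*m+1):ℝ)^2 * F2^2)
      ≤ π * K * (K/(2*E))^(2*m+1) * ((2^(2*m+1):ℝ)^2 * (π * c * (2*M) * ((M/E)^m)^2)) := by
        have hmul : (0:ℝ) ≤ π * K * (K/(2*E))^(2*m+1) * ((2^(2*m+1):ℝ)^2) := by positivity
        calc π * K * (K/(2*E))^(2*m+1) * ((2^(2*m+1):ℝ)^2 * F2^2)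
            = (π * K * (K/(2*E))^(2*m+1) * (2^(2*m+1):ℝ)^2) * F2^2 := by ring
          _ ≤ (π * K * (K/(2*E))^(2*m+1) * (2^(2*m+1):ℝ)^2) * (π * c * (2*M) * ((M/E)^m)^2) :=
              mul_le_mul_of_nonneg_left B2 hmul
          _ = π * K * (K/(2*E))^(2*m+1) * ((2^(2*m+1):ℝ)^2 * (π * c * (2*M) * ((M/E)^m)^2)) := by
              ring
    _ < π * (π * (2*K) * ((K/E)^(2*m+1))^2) := by
        have eqL : π * K * (K/(2*E))^(2*m+1) * ((2^(2*m+1):ℝ)^2 * (π * c * (2*M) * ((M/E)^m)^2))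
            = (2*π^2*K*K^(2*m+1)/E^(4*m+2)) * (E * c * (2*M)^(2*m+1)) := by
          have hE' : E ≠ 0 := hE0.ne'
          simp only [div_pow, mul_pow, ← pow_mul]
          field_simp
          ring
        have eqR : π * (π * (2*K) * ((K/E)^(2*m+1))^2)
            = (2*π^2*K*K^(2*m+1)/E^(4*m+2)) * K^(2*m+1) := by
          have hE' : E ≠ 0 := hE0.ne'
          simp only [div_pow, mul_pow, ← pow_mul]
          field_simp
          ring
        rw [eqL, eqR]
        exact mul_lt_mul_of_pos_left D1 stuffpos
    _ ≤ π * F1^2 := mul_le_mul_of_nonneg_left A2 pi_pos.le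

lemma gamma_sq_gt (n : ℕ) (hn : 1 ≤ n) :
    π * n * ((n:ℝ) / (2 * exp 1)) ^ n < Real.Gamma ((n:ℝ)/2 + 1) ^ 2 := by
  rcases Nat.even_or_odd n with ⟨m, rfl⟩ | ⟨m, rfl⟩
  · have hm : 1 ≤ m := by omega
    have harg : ((m + m : ℕ):ℝ)/2 + 1 = (m:ℝ) + 1 := by push_cast; ring
    rw [harg, Real.Gamma_nat_eq_factorial]
    have e1 : ((m+m:ℕ):ℝ) = 2*(m:ℝ) := by push_cast; ring
    have e2 : m + m = 2*m := by omega
    rw [e1, e2]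
    exact even_key m hm
  · -- n = 2*m+1
    have harg : ((2*m+1 : ℕ):ℝ)/2 + 1 = ((m:ℝ) + 1) + 1/2 := by push_cast; ring
    have hfac : (0:ℝ) < (m.factorial : ℝ) := by exact_mod_cast Nat.factorial_pos m
    have hdup := Real.Gamma_mul_Gamma_add_half ((m:ℝ)+1)
    have hg1 : Real.Gamma ((m:ℝ)+1) = (m.factorial : ℝ) := Real.Gamma_nat_eq_factorial m
    have hg2 : Real.Gamma (2*((m:ℝ)+1)) = ((2*m+1).factorial : ℝ) := by
      have : 2*((m:ℝ)+1) = ((2*m+1:ℕ):ℝ) + 1 := by push_cast; ring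
      rw [this, Real.Gamma_nat_eq_factorial]
    have hrp : (2:ℝ) ^ ((1:ℝ) - 2*((m:ℝ)+1)) = ((2:ℝ)^(2*m+1))⁻¹ := by
      have h1 : (1:ℝ) - 2*((m:ℝ)+1) = -((2*m+1:ℕ):ℝ) := by push_cast; ring
      rw [h1, Real.rpow_neg (by norm_num : (0:ℝ) ≤ 2), Real.rpow_natCast]
    have hGamma : Real.Gamma (((2*m+1 : ℕ):ℝ)/2 + 1) =
        Real.sqrt π * (((2*m+1).factorial:ℝ)) / (2^(2*m+1) * ((m.factorial:ℝ))) := by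
      rw [harg]
      have := hdup
      rw [hg1, hg2, hrp] at this
      field_simp at this ⊢
      linarith [this]
    rw [hGamma]
    rcases Nat.eq_zero_or_pos m with rfl | hm
    · norm_num [Nat.factorial]
      rw [div_pow, Real.sq_sqrt pi_pos.le]
      have he : (2:ℝ) < exp 1 := by nlinarith [Real.exp_one_gt_d9]
      have h1 : (exp 1)⁻¹ < 1/2 := by
        rw [inv_eq_one_div, div_lt_div_iff₀ (exp_pos 1) (by norm_num)]; linarith
      have h2 : π * (1/2) * (exp 1)⁻¹ < π * (1/2) * (1/2) :=
        mul_lt_mul_of_pos_left h1 (by positivity)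
      nlinarith [pi_pos]
    · have key := odd_key m hm
      have e1 : ((2*m+1:ℕ):ℝ) = 2*(m:ℝ)+1 := by push_cast; ring
      rw [e1]
      exact key

lemma volume_cb (n : ℕ) (hn : 1 ≤ n) (r : ℝ) (hr : 0 ≤ r) :
    (volume (Metric.closedBall (0 : En n) r)).toReal
      = r ^ n * (Real.sqrt π ^ n / Real.Gamma ((n:ℝ)/2 + 1)) := by
  haveI : Nonempty (Fin n) := ⟨⟨0, hn⟩⟩
  have hG : 0 < Real.Gamma ((n:ℝ)/2+1) := Real.Gamma_pos_of_pos (by positivity)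
  rw [EuclideanSpace.volume_closedBall]
  simp only [Fintype.card_fin]
  rw [ENNReal.toReal_mul, ENNReal.toReal_pow, ENNReal.toReal_ofReal hr,
    ENNReal.toReal_ofReal (div_nonneg (by positivity) hG.le)]

lemma fourier_bound (n : ℕ) (β : ℝ) (k : En n) :
    ‖fourierT (ballIndicator n β) k‖ ≤
      Real.sqrt ((volume (Metric.closedBall (0:En n) β)).toReal) := by
  set V := (volume (Metric.closedBall (0:En n) β)).toReal with hV
  have hV0 : (0:ℝ) ≤ V := ENNReal.toReal_nonneg
  have step1 : ‖fourierT (ballIndicator n β) k‖ ≤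
      ∫ x : En n, ‖Complex.exp (-2 * Real.pi * Complex.I * ((inner ℝ k x : ℝ) : ℂ)) *
        ballIndicator n β x‖ := norm_integral_le_integral_norm _
  have step2 : (∫ x : En n, ‖Complex.exp (-2 * Real.pi * Complex.I * ((inner ℝ k x : ℝ) : ℂ)) *
        ballIndicator n β x‖)
      = ∫ x : En n, Set.indicator (Metric.closedBall (0:En n) β)
          (fun _ => (Real.sqrt V)⁻¹) x := by
    congr 1
    funext x
    rw [norm_mul]
    have h1 : ‖Complex.exp (-2 * Real.pi * Complex.I * ((inner ℝ k x : ℝ) : ℂ))‖ = 1 := by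
      rw [Complex.norm_exp]
      have : (-2 * (Real.pi:ℂ) * Complex.I * ((inner ℝ k x : ℝ) : ℂ)).re = 0 := by
        simp [Complex.mul_re, Complex.mul_im]
      rw [this, Real.exp_zero]
    rw [h1, one_mul, ballIndicator]
    by_cases hx : x ∈ Metric.closedBall (0:En n) β
    · have h2 : ‖(((Real.sqrt ((volume (Metric.closedBall (0:En n) β)).toReal))⁻¹ : ℝ) : ℂ)‖
          = (Real.sqrt V)⁻¹ := by
        rw [Complex.norm_real, Real.norm_eq_abs, ← hV, abs_of_nonneg (by positivity)]
      rw [if_pos hx, Set.indicator_of_mem hx, h2]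
    · rw [if_neg hx, Set.indicator_of_notMem hx, norm_zero]
  have step3 : (∫ x : En n, Set.indicator (Metric.closedBall (0:En n) β)
      (fun _ => (Real.sqrt V)⁻¹) x) = V * (Real.sqrt V)⁻¹ := by
    rw [integral_indicator_const _ measurableSet_closedBall, smul_eq_mul]; rfl
  have step4 : V * (Real.sqrt V)⁻¹ ≤ Real.sqrt V :=
    le_of_eq (by rw [← div_eq_mul_inv, Real.div_sqrt])
  calc ‖fourierT (ballIndicator n β) k‖ ≤ _ := step1
    _ = _ := step2
    _ = _ := step3
    _ ≤ _ := step4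


end AuxProof

/-- **Low-frequency power of the ball.**  For the normalized indicator `f` of the ball of
radius `β` in `ℝⁿ` and every `z > 0`,
`∫_{|k| ≤ z} |f̂(k)|² dk < (1/(πn)) (2πβez/n)ⁿ`. -/
theorem ball_low_frequency_power
    (n : ℕ) (hn : 1 ≤ n) (β : ℝ) (hβ : 0 < β) (z : ℝ) (hz : 0 < z) :
    (∫ k in Metric.closedBall (0 : En n) z, ‖fourierT (ballIndicator n β) k‖ ^ 2 <
      (1 / (Real.pi * n)) * (2 * Real.pi * β * Real.exp 1 * z / n) ^ n) ∧
    (∫ k in Metric.closedBall (0 : En n) ((n : ℝ) / (2 * Real.pi * β * Real.exp 1)),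
        ‖fourierT (ballIndicator n β) k‖ ^ 2 < 1 / (Real.pi * n)) := by
  have hπ := pi_pos
  have hnR : (0:ℝ) < n := by exact_mod_cast hn
  have main : ∀ z : ℝ, 0 < z →
      (∫ k in Metric.closedBall (0 : En n) z, ‖fourierT (ballIndicator n β) k‖ ^ 2 <
        (1 / (Real.pi * n)) * (2 * Real.pi * β * Real.exp 1 * z / n) ^ n) := by
    intro z hz
    set V := (volume (Metric.closedBall (0:En n) β)).toReal with hVdef
    set G := Real.Gamma ((n:ℝ)/2+1) with hGdef
    have hGpos : 0 < G := Real.Gamma_pos_of_pos (by positivity)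
    have hVeq : V = β^n * (Real.sqrt π^n / G) := volume_cb n hn β hβ.le
    have hWeq : (volume (Metric.closedBall (0:En n) z)).toReal
        = z^n * (Real.sqrt π^n / G) := volume_cb n hn z hz.le
    have hbound : ∀ k : En n, ‖fourierT (ballIndicator n β) k‖^2 ≤ V := by
      intro k
      have h := fourier_bound n β k
      have h2 := pow_le_pow_left₀ (norm_nonneg _) h 2
      rwa [Real.sq_sqrt ENNReal.toReal_nonneg] at h2
    have hIle : (∫ k in Metric.closedBall (0 : En n) z, ‖fourierT (ballIndicator n β) k‖ ^ 2)
        ≤ (volume (Metric.closedBall (0:En n) z)).toReal * V := by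
      by_cases hInt : IntegrableOn (fun k => ‖fourierT (ballIndicator n β) k‖ ^ 2)
          (Metric.closedBall (0:En n) z) volume
      · have hc : IntegrableOn (fun _ : En n => V) (Metric.closedBall (0:En n) z) volume :=
          integrableOn_const measure_closedBall_lt_top.ne
        have := setIntegral_mono_on hInt hc measurableSet_closedBall (fun k _ => hbound k)
        rwa [setIntegral_const, smul_eq_mul] at this
      · rw [integral_undef hInt]
        exact mul_nonneg ENNReal.toReal_nonneg ENNReal.toReal_nonneg
    refine lt_of_le_of_lt hIle ?_
    rw [hWeq, hVeq]
    have key := gamma_sq_gt n hn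
    rw [← hGdef] at key
    have hsq : Real.sqrt π^n * Real.sqrt π^n = π^n := by
      rw [← mul_pow, Real.mul_self_sqrt pi_pos.le]
    have e1 : z^n * (Real.sqrt π^n/G) * (β^n * (Real.sqrt π^n/G)) = (β*z)^n * (π^n / G^2) := by
      rw [mul_pow β z, ← hsq, pow_two]
      field_simp
    have e2 : 1/(π*(n:ℝ)) * (2*π*β*exp 1*z/(n:ℝ))^n
        = (β*z)^n * ((2*π*exp 1/(n:ℝ))^n / (π*(n:ℝ))) := by
      ring
    rw [e1, e2]
    have hbz : (0:ℝ) < (β*z)^n := by positivity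
    have core : π^n / G^2 < (2*π*exp 1/(n:ℝ))^n / (π*(n:ℝ)) := by
      rw [div_lt_div_iff₀ (by positivity) (by positivity)]
      have hre : (2*π*exp 1/(n:ℝ))^n * (((n:ℝ))/(2*exp 1))^n = π^n := by
        rw [← mul_pow]
        congr 1
        field_simp
      calc π^n * (π*(n:ℝ)) = (2*π*exp 1/(n:ℝ))^n * (π*(n:ℝ)*(((n:ℝ))/(2*exp 1))^n) := by
            rw [show (2*π*exp 1/(n:ℝ))^n * (π*(n:ℝ)*(((n:ℝ))/(2*exp 1))^n)
              = (π*(n:ℝ)) * ((2*π*exp 1/(n:ℝ))^n * (((n:ℝ))/(2*exp 1))^n) from by ring, hre]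
            ring
        _ < (2*π*exp 1/(n:ℝ))^n * G^2 := by
            exact mul_lt_mul_of_pos_left key (by positivity)
    exact mul_lt_mul_of_pos_left core hbz
  refine ⟨main z hz, ?_⟩
  have hz0 : (0:ℝ) < (n:ℝ)/(2*π*β*exp 1) := by positivity
  have h := main _ hz0
  have e : (2*π*β*exp 1 * ((n:ℝ)/(2*π*β*exp 1)) / (n:ℝ)) ^ n = 1 := by
    have hb : 2*π*β*exp 1 * ((n:ℝ)/(2*π*β*exp 1)) / (n:ℝ) = 1 := by
      field_simp
    rw [hb, one_pow]
  rw [e, mul_one] at h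
  exact h

end
end

section
/- Let α ∈ ℝ and let f : [α, ∞) → ℝ be nonnegative, monotone nonincreasing, and integrable on [α, ∞). Then ∫_α^∞ f(x) cos²(x) dx ≥ (1/2) · ∫_{α+π}^∞ f(x) dx. -/
open Real MeasureTheory Set

/-- **Averaging against `cos²`:**  if `f : [α, ∞) → ℝ` is nonnegative, monotone
nonincreasing and integrable, then `∫_α^∞ f(x) cos²(x) dx ≥ (1/2) ∫_{α+π}^∞ f(x) dx`. -/
theorem integral_cos_sq_ge (α : ℝ) (f : ℝ → ℝ)
    (hf0 : ∀ x ∈ Set.Ici α, 0 ≤ f x)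
    (hmono : AntitoneOn f (Set.Ici α))
    (hint : IntegrableOn f (Set.Ici α)) :
    (1 / 2) * ∫ x in Set.Ici (α + Real.pi), f x ≤
      ∫ x in Set.Ici α, f x * (Real.cos x) ^ 2 := by
  have hπ : (0:ℝ) < Real.pi := Real.pi_pos
  -- integrability of f * cos², f * sin² on Ici α
  have hbd : ∀ g : ℝ → ℝ, Continuous g → (∀ x, |g x| ≤ 1) →
      IntegrableOn (fun x => f x * g x ^ 2) (Ici α) := by
    intro g hg hg1
    refine Integrable.mono' hint.norm
      (hint.1.mul ((hg.pow 2).aestronglyMeasurable.restrict)) ?_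
    filter_upwards with x
    rw [norm_mul]
    have : ‖g x ^ 2‖ ≤ 1 := by
      rw [Real.norm_eq_abs, abs_pow]
      calc |g x| ^ 2 ≤ 1 ^ 2 := by
            exact pow_le_pow_left₀ (abs_nonneg _) (hg1 x) 2
        _ = 1 := one_pow 2
    calc ‖f x‖ * ‖g x ^ 2‖ ≤ ‖f x‖ * 1 :=
          mul_le_mul_of_nonneg_left this (norm_nonneg _)
      _ = ‖f x‖ := mul_one _
  have hintc : IntegrableOn (fun x => f x * Real.cos x ^ 2) (Ici α) :=
    hbd _ Real.continuous_cos fun x => Real.abs_cos_le_one x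
  have hints : IntegrableOn (fun x => f x * Real.sin x ^ 2) (Ici α) :=
    hbd _ Real.continuous_sin fun x => Real.abs_sin_le_one x
  -- nonnegativity of f * cos² a.e. on Ici α
  have hnnc : 0 ≤ᵐ[volume.restrict (Ici α)] fun x => f x * Real.cos x ^ 2 :=
    (ae_restrict_iff' measurableSet_Ici).2
      (ae_of_all _ fun x hx => mul_nonneg (hf0 x hx) (sq_nonneg _))
  -- step A : decompose the integral of f over Ici (α+π)
  have hsub : Ici (α + Real.pi) ⊆ Ici α := Ici_subset_Ici.2 (by linarith)
  have hA : ∫ x in Ici (α + Real.pi), f x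
      = (∫ x in Ici (α + Real.pi), f x * Real.cos x ^ 2)
        + ∫ x in Ici (α + Real.pi), f x * Real.sin x ^ 2 := by
    rw [← integral_add (hintc.mono_set hsub) (hints.mono_set hsub)]
    refine setIntegral_congr_fun measurableSet_Ici fun x _ => ?_
    rw [← mul_add, Real.cos_sq_add_sin_sq, mul_one]
  -- step B : the cos² part
  have hB : (∫ x in Ici (α + Real.pi), f x * Real.cos x ^ 2)
      ≤ ∫ x in Ici α, f x * Real.cos x ^ 2 :=
    setIntegral_mono_set hintc hnnc (HasSubset.Subset.eventuallyLE hsub)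
  -- step C : the sin² part, via the substitution x = y + π/2
  have hT : MeasurePreserving (fun y : ℝ => y + Real.pi / 2) volume volume :=
    measurePreserving_add_right volume (Real.pi / 2)
  have hTe : MeasurableEmbedding (fun y : ℝ => y + Real.pi / 2) :=
    (Homeomorph.addRight (Real.pi / 2)).measurableEmbedding
  have hpre : (fun y : ℝ => y + Real.pi / 2) ⁻¹' Ici (α + Real.pi)
      = Ici (α + Real.pi / 2) := by
    ext y
    simp only [mem_preimage, mem_Ici]
    constructor <;> intro h <;> linarith
  have hC1 : ∫ x in Ici (α + Real.pi), f x * Real.sin x ^ 2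
      = ∫ y in Ici (α + Real.pi / 2),
          f (y + Real.pi / 2) * Real.cos y ^ 2 := by
    rw [← hT.setIntegral_preimage_emb hTe
      (fun x => f x * Real.sin x ^ 2) (Ici (α + Real.pi)), hpre]
    refine setIntegral_congr_fun measurableSet_Ici fun y _ => ?_
    rw [Real.sin_add_pi_div_two]
  -- integrability of the shifted function
  have hshift : IntegrableOn (fun y => f (y + Real.pi / 2) * Real.cos y ^ 2)
      (Ici (α + Real.pi / 2)) := by
    have := (hT.restrict_preimage_emb hTe (Ici (α + Real.pi))).integrable_comp_emb hTe
      (g := fun x => f x * Real.sin x ^ 2)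
    rw [hpre] at this
    have h2 : IntegrableOn (fun y => f (y + Real.pi / 2) * Real.sin (y + Real.pi / 2) ^ 2)
        (Ici (α + Real.pi / 2)) := this.2 ((hints.mono_set hsub))
    refine h2.congr_fun (fun y _ => ?_) measurableSet_Ici
    dsimp only
    rw [Real.sin_add_pi_div_two]
  have hsub2 : Ici (α + Real.pi / 2) ⊆ Ici α := Ici_subset_Ici.2 (by linarith)
  have hC2 : (∫ y in Ici (α + Real.pi / 2), f (y + Real.pi / 2) * Real.cos y ^ 2)
      ≤ ∫ y in Ici (α + Real.pi / 2), f y * Real.cos y ^ 2 := by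
    refine setIntegral_mono_on hshift (hintc.mono_set hsub2) measurableSet_Ici
      fun y hy => ?_
    have hyα : y ∈ Ici α := hsub2 hy
    have hy2 : y + Real.pi / 2 ∈ Ici α := le_trans hyα.out (by linarith)
    exact mul_le_mul_of_nonneg_right (hmono hyα hy2 (by linarith)) (sq_nonneg _)
  have hC3 : (∫ y in Ici (α + Real.pi / 2), f y * Real.cos y ^ 2)
      ≤ ∫ x in Ici α, f x * Real.cos x ^ 2 :=
    setIntegral_mono_set hintc hnnc (HasSubset.Subset.eventuallyLE hsub2)
  linarith
end

section
/- Let W(r) = √(8/3)·sin²(π log r) for 1/e ≤ r ≤ 1 and W(r) = 0 otherwise. Let h : (0,∞) → [0,∞] be measurable, let λ > 0, let 0 < η ≤ 1, and let n ≥ 2 be a real number. Then ∫₀^η ( ∫₀^∞ h(r) · W(λ·a·r)² · r^{n−1} dr ) da ≤ (1/λ) · ∫_{1/(λ η e)}^∞ h(r) · r^{n−2} dr. -/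
open Real MeasureTheory Set
open scoped ENNReal Classical

noncomputable section

/-- The radial window `W(r) = √(8/3) sin²(π log r)` on `[1/e, 1]`, `0` elsewhere. -/
def W0 : ℝ → ℝ := fun r =>
  if (Real.exp 1)⁻¹ ≤ r ∧ r ≤ 1 then Real.sqrt (8 / 3) * (Real.sin (Real.pi * Real.log r)) ^ 2
  else 0


lemma W0_meas : Measurable W0 := by
  unfold W0
  apply Measurable.ite
  · exact (measurableSet_le measurable_const measurable_id).inter
      (measurableSet_le measurable_id measurable_const)
  · exact (measurable_const.mul ((Real.measurable_sin.comp
      (measurable_const.mul Real.measurable_log)).pow_const 2))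
  · exact measurable_const

lemma contOn_sin_log (m : ℕ) (s : Set ℝ) (hs : ∀ t ∈ s, t ≠ 0) :
    ContinuousOn (fun t : ℝ => Real.sin (Real.pi * Real.log t) ^ m) s := by
  apply ContinuousOn.pow
  exact Real.continuous_sin.comp_continuousOn
    ((Real.continuousOn_log.mono (fun t ht => hs t ht)).const_smul Real.pi)

lemma sinsq_intervalIntegral_le :
    ∫ t in (Real.exp 1)⁻¹..1, Real.sin (Real.pi * Real.log t) ^ 2 ≤ 3 / 8 := by
  have hE : (0:ℝ) < (Real.exp 1)⁻¹ := by positivity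
  have hE1 : (Real.exp 1)⁻¹ ≤ 1 := by
    rw [inv_le_one_iff₀]; right; exact Real.one_le_exp one_pos.le
  set K : ℝ := 1 + 4 * Real.pi ^ 2 with hK
  have hKpos : (0:ℝ) < K := by positivity
  set F : ℝ → ℝ := fun t => t * (1/2 - (2*K)⁻¹ * Real.cos (2*Real.pi*Real.log t)
      - (Real.pi / K) * Real.sin (2*Real.pi*Real.log t)) with hF
  have huIcc : Set.uIcc ((Real.exp 1)⁻¹) 1 = Set.Icc ((Real.exp 1)⁻¹) 1 :=
    Set.uIcc_of_le hE1
  have hderiv : ∀ t ∈ Set.uIcc ((Real.exp 1)⁻¹) 1,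
      HasDerivAt F (Real.sin (Real.pi * Real.log t) ^ 2) t := by
    intro t ht
    rw [huIcc] at ht
    have ht0 : 0 < t := lt_of_lt_of_le hE ht.1
    have hlog : HasDerivAt Real.log t⁻¹ t := Real.hasDerivAt_log ht0.ne'
    have h1 : HasDerivAt (fun t => 2*Real.pi*Real.log t) (2*Real.pi*t⁻¹) t :=
      hlog.const_mul _
    have hcos : HasDerivAt (fun t => Real.cos (2*Real.pi*Real.log t))
        (-Real.sin (2*Real.pi*Real.log t) * (2*Real.pi*t⁻¹)) t := h1.cos
    have hsin : HasDerivAt (fun t => Real.sin (2*Real.pi*Real.log t))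
        (Real.cos (2*Real.pi*Real.log t) * (2*Real.pi*t⁻¹)) t := h1.sin
    have hg : HasDerivAt (fun t => 1/2 - (2*K)⁻¹ * Real.cos (2*Real.pi*Real.log t)
        - (Real.pi / K) * Real.sin (2*Real.pi*Real.log t))
        (0 - (2*K)⁻¹ * (-Real.sin (2*Real.pi*Real.log t) * (2*Real.pi*t⁻¹))
          - (Real.pi / K) * (Real.cos (2*Real.pi*Real.log t) * (2*Real.pi*t⁻¹))) t :=
      ((hasDerivAt_const t (1/2:ℝ)).sub (hcos.const_mul _)).sub (hsin.const_mul _)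
    have hprod := (hasDerivAt_id t).mul hg
    convert hprod using 1 <;> try rfl
    rw [Real.sin_sq_eq_half_sub]
    have h2 : 2 * (Real.pi * Real.log t) = 2*Real.pi*Real.log t := by ring
    rw [h2]
    field_simp
    simp only [id, hK]
    ring
  have hInt : IntervalIntegrable (fun t => Real.sin (Real.pi*Real.log t) ^ 2) volume
      ((Real.exp 1)⁻¹) 1 := by
    apply ContinuousOn.intervalIntegrable
    rw [huIcc]
    exact contOn_sin_log 2 _ (fun t ht => (lt_of_lt_of_le hE ht.1).ne')
  rw [intervalIntegral.integral_eq_sub_of_hasDerivAt hderiv hInt]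
  have hF1 : F 1 = 1/2 - (2*K)⁻¹ := by
    simp [hF, Real.log_one]
  have hFe : F ((Real.exp 1)⁻¹) = (Real.exp 1)⁻¹ * (1/2 - (2*K)⁻¹) := by
    have hl : Real.log ((Real.exp 1)⁻¹) = -1 := by
      rw [Real.log_inv, Real.log_exp]
    rw [hF]
    simp only [hl]
    have h2 : 2*Real.pi*(-1:ℝ) = -(2*Real.pi) := by ring
    rw [h2, Real.cos_neg, Real.sin_neg, Real.cos_two_pi, Real.sin_two_pi]
    ring
  rw [hF1, hFe]
  have he4 : Real.exp 1 ≤ 4 := by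
    have := Real.exp_one_lt_d9
    linarith
  have hi : (4:ℝ)⁻¹ ≤ (Real.exp 1)⁻¹ := by
    exact inv_anti₀ (Real.exp_pos 1) he4
  have hKinv : (0:ℝ) < (2*K)⁻¹ := by positivity
  have hKinv2 : (2*K)⁻¹ ≤ 1/2 := by
    rw [inv_le_comm₀ (by positivity) (by norm_num)]
    nlinarith [Real.pi_pos]
  nlinarith

end

noncomputable section

lemma W0_sq_eq : (fun t => W0 t ^ 2) = Set.indicator (Set.Icc ((Real.exp 1)⁻¹) 1)
    (fun t => 8/3 * Real.sin (Real.pi * Real.log t) ^ 4) := by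
  funext t
  by_cases ht : (Real.exp 1)⁻¹ ≤ t ∧ t ≤ 1
  · rw [W0, if_pos ht, Set.indicator_of_mem (Set.mem_Icc.mpr ht)]
    rw [mul_pow, Real.sq_sqrt (by norm_num : (0:ℝ) ≤ 8/3)]
    ring
  · rw [W0, if_neg ht, Set.indicator_of_notMem (fun hm => ht (Set.mem_Icc.mp hm))]
    norm_num

lemma W0_sq_integrable : Integrable (fun t => W0 t ^ 2) := by
  rw [W0_sq_eq]
  apply MeasureTheory.IntegrableOn.integrable_indicator _ measurableSet_Icc
  apply ContinuousOn.integrableOn_compact isCompact_Icc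
  exact (contOn_sin_log 4 _ (fun t ht => (lt_of_lt_of_le (by positivity) ht.1).ne')).const_smul (8/3:ℝ)

lemma W0_sq_integral_le : ∫ t, W0 t ^ 2 ≤ 1 := by
  have hE : (0:ℝ) < (Real.exp 1)⁻¹ := by positivity
  have hE1 : (Real.exp 1)⁻¹ ≤ 1 := by
    rw [inv_le_one_iff₀]; right; exact Real.one_le_exp one_pos.le
  have hne : ∀ t ∈ Set.Icc ((Real.exp 1)⁻¹) 1, t ≠ (0:ℝ) :=
    fun t ht => (lt_of_lt_of_le hE ht.1).ne'
  have hint4 : IntegrableOn (fun t => 8/3 * Real.sin (Real.pi * Real.log t) ^ 4)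
      (Set.Icc ((Real.exp 1)⁻¹) 1) :=
    ContinuousOn.integrableOn_compact isCompact_Icc
      ((contOn_sin_log 4 _ hne).const_smul (8/3:ℝ))
  have hint2 : IntegrableOn (fun t => 8/3 * Real.sin (Real.pi * Real.log t) ^ 2)
      (Set.Icc ((Real.exp 1)⁻¹) 1) :=
    ContinuousOn.integrableOn_compact isCompact_Icc
      ((contOn_sin_log 2 _ hne).const_smul (8/3:ℝ))
  rw [W0_sq_eq, MeasureTheory.integral_indicator measurableSet_Icc]
  calc ∫ t in Set.Icc ((Real.exp 1)⁻¹) 1, 8/3 * Real.sin (Real.pi * Real.log t) ^ 4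
      ≤ ∫ t in Set.Icc ((Real.exp 1)⁻¹) 1, 8/3 * Real.sin (Real.pi * Real.log t) ^ 2 := by
        apply MeasureTheory.setIntegral_mono_on hint4 hint2 measurableSet_Icc
        intro t _
        have h1 : Real.sin (Real.pi * Real.log t) ^ 2 ≤ 1 := by
          nlinarith [Real.sin_le_one (Real.pi * Real.log t),
            Real.neg_one_le_sin (Real.pi * Real.log t)]
        nlinarith [sq_nonneg (Real.sin (Real.pi * Real.log t))]
    _ = 8/3 * ∫ t in (Real.exp 1)⁻¹..1, Real.sin (Real.pi * Real.log t) ^ 2 := by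
        rw [MeasureTheory.integral_Icc_eq_integral_Ioc,
          intervalIntegral.integral_of_le hE1, MeasureTheory.integral_const_mul]
    _ ≤ 8/3 * (3/8) := by
        have := sinsq_intervalIntegral_le
        linarith
    _ = 1 := by norm_num

lemma lintegral_W0_sq_le (c : ℝ) (hc : 0 < c) (s : Set ℝ) :
    ∫⁻ a in s, ENNReal.ofReal (W0 (c * a) ^ 2) ≤ ENNReal.ofReal (1 / c) := by
  have hci : Integrable (fun a => W0 (c * a) ^ 2) :=
    W0_sq_integrable.comp_mul_left' hc.ne'
  calc ∫⁻ a in s, ENNReal.ofReal (W0 (c * a) ^ 2)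
      ≤ ∫⁻ a, ENNReal.ofReal (W0 (c * a) ^ 2) := setLIntegral_le_lintegral _ _
    _ = ENNReal.ofReal (∫ a, W0 (c * a) ^ 2) :=
        (MeasureTheory.ofReal_integral_eq_lintegral_ofReal hci
          (Filter.Eventually.of_forall fun a => sq_nonneg _)).symm
    _ ≤ ENNReal.ofReal (1 / c) := by
        apply ENNReal.ofReal_le_ofReal
        rw [MeasureTheory.Measure.integral_comp_mul_left (fun t => W0 t ^ 2) c,
          smul_eq_mul, abs_of_pos (inv_pos.mpr hc), one_div]
        calc c⁻¹ * ∫ t, W0 t ^ 2 ≤ c⁻¹ * 1 :=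
            mul_le_mul_of_nonneg_left W0_sq_integral_le (inv_nonneg.mpr hc.le)
          _ = c⁻¹ := mul_one _

/-- **Radial window integral bound:**  for measurable `h : (0,∞) → [0,∞]`, `λ > 0`,
`0 < η ≤ 1` and real `n ≥ 2`,
`∫₀^η ∫₀^∞ h(r) W(λ a r)² r^{n−1} dr da ≤ (1/λ) ∫_{1/(ληe)}^∞ h(r) r^{n−2} dr`. -/
theorem radial_window_integral_le (h : ℝ → ℝ≥0∞) (hmeas : Measurable h)
    (L : ℝ) (hL : 0 < L) (η : ℝ) (hη0 : 0 < η) (hη1 : η ≤ 1)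
    (n : ℝ) (hn : 2 ≤ n) :
    (∫⁻ a in Set.Ioc (0 : ℝ) η,
        ∫⁻ r in Set.Ioi (0 : ℝ), h r * ENNReal.ofReal ((W0 (L * a * r)) ^ 2 * r ^ (n - 1))) ≤
      ENNReal.ofReal (1 / L) *
        ∫⁻ r in Set.Ici (1 / (L * η * Real.exp 1)), h r * ENNReal.ofReal (r ^ (n - 2)) := by
  set thr : ℝ := 1 / (L * η * Real.exp 1) with hthr
  have hthr0 : 0 < thr := by positivity
  set g : ℝ → ℝ≥0∞ := fun r => ENNReal.ofReal (1 / L) * (h r * ENNReal.ofReal (r ^ (n - 2)))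
    with hg
  have hgmeas : Measurable g := by
    apply Measurable.const_mul
    exact hmeas.mul (by fun_prop)
  have hFmeas : Measurable (Function.uncurry fun (a : ℝ) (r : ℝ) =>
      h r * ENNReal.ofReal ((W0 (L * a * r)) ^ 2 * r ^ (n - 1))) := by
    apply Measurable.mul (hmeas.comp measurable_snd)
    apply ENNReal.measurable_ofReal.comp
    apply Measurable.mul
    · exact (W0_meas.comp ((measurable_const.mul measurable_fst).mul measurable_snd)).pow_const 2
    · fun_prop
  rw [lintegral_lintegral_swap hFmeas.aemeasurable]
  have key : ∀ r ∈ Set.Ioi (0 : ℝ),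
      (∫⁻ a in Set.Ioc (0 : ℝ) η, h r * ENNReal.ofReal ((W0 (L * a * r)) ^ 2 * r ^ (n - 1)))
        ≤ (Set.Ici thr).indicator g r := by
    intro r hr
    have hr0 : (0 : ℝ) < r := hr
    by_cases hcase : thr ≤ r
    · rw [Set.indicator_of_mem (show r ∈ Set.Ici thr from hcase) g]
      have hre : ∀ a : ℝ, h r * ENNReal.ofReal ((W0 (L * a * r)) ^ 2 * r ^ (n - 1))
          = (h r * ENNReal.ofReal (r ^ (n - 1))) * ENNReal.ofReal ((W0 ((L * r) * a)) ^ 2) := by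
        intro a
        rw [show L * a * r = (L * r) * a by ring, ENNReal.ofReal_mul (sq_nonneg _)]
        ring
      rw [lintegral_congr hre, lintegral_const_mul _
        (show Measurable (fun a : ℝ => ENNReal.ofReal ((W0 ((L * r) * a)) ^ 2)) from
          ((W0_meas.comp (measurable_id.const_mul (L * r))).pow_const 2).ennreal_ofReal)]
      calc (h r * ENNReal.ofReal (r ^ (n - 1))) *
            ∫⁻ a in Set.Ioc (0 : ℝ) η, ENNReal.ofReal ((W0 ((L * r) * a)) ^ 2)
          ≤ (h r * ENNReal.ofReal (r ^ (n - 1))) * ENNReal.ofReal (1 / (L * r)) :=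
            mul_le_mul_right (lintegral_W0_sq_le (L * r) (by positivity) _) _
        _ = g r := by
            rw [hg, mul_assoc, ← ENNReal.ofReal_mul (Real.rpow_nonneg hr0.le _)]
            have hreal : r ^ (n - 1) * (1 / (L * r)) = (1 / L) * r ^ (n - 2) := by
              have h1 : r ^ (n - 1) = r ^ (n - 2) * r := by
                rw [← Real.rpow_add_one hr0.ne' (n - 2), show n - 2 + 1 = n - 1 by ring]
              rw [h1]
              field_simp
            rw [hreal, ENNReal.ofReal_mul (by positivity), ← mul_assoc, mul_comm (h r),
              mul_assoc]
    · rw [Set.indicator_of_notMem (show r ∉ Set.Ici thr from hcase) g]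
      have hz : ∀ a ∈ Set.Ioc (0 : ℝ) η,
          h r * ENNReal.ofReal ((W0 (L * a * r)) ^ 2 * r ^ (n - 1)) = 0 := by
        intro a ha
        have hrlt : r < thr := lt_of_not_ge hcase
        have hW : W0 (L * a * r) = 0 := by
          rw [W0, if_neg]
          rintro ⟨h1, -⟩
          have hle : L * a * r ≤ L * η * r := by
            have := mul_le_mul_of_nonneg_right (mul_le_mul_of_nonneg_left ha.2 hL.le) hr0.le
            linarith
          have h2 : L * η * r < (Real.exp 1)⁻¹ := by
            have : L * η * r < L * η * thr := by
              apply mul_lt_mul_of_pos_left hrlt (by positivity)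
            calc L * η * r < L * η * thr := this
              _ = (Real.exp 1)⁻¹ := by rw [hthr]; field_simp
          linarith
        rw [hW]
        norm_num
      rw [MeasureTheory.setLIntegral_congr_fun measurableSet_Ioc
        hz, lintegral_zero]
  calc (∫⁻ r in Set.Ioi (0 : ℝ),
        ∫⁻ a in Set.Ioc (0 : ℝ) η, h r * ENNReal.ofReal ((W0 (L * a * r)) ^ 2 * r ^ (n - 1)))
      ≤ ∫⁻ r in Set.Ioi (0 : ℝ), (Set.Ici thr).indicator g r :=
        MeasureTheory.setLIntegral_mono (hgmeas.indicator measurableSet_Ici) key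
    _ = ∫⁻ r in Set.Ici thr, g r := by
        have hss : Set.Ici thr ∩ Set.Ioi (0:ℝ) = Set.Ici thr :=
          Set.inter_eq_left.mpr (fun x hx => lt_of_lt_of_le hthr0 hx)
        rw [lintegral_indicator measurableSet_Ici, Measure.restrict_restrict measurableSet_Ici,
          hss]
    _ = ENNReal.ofReal (1 / L) *
          ∫⁻ r in Set.Ici thr, h r * ENNReal.ofReal (r ^ (n - 2)) := by
        exact lintegral_const_mul _ (hmeas.mul (by fun_prop))

end
end
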